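/- For a single axially loaded bar: if u(t) satisfies EA·u''(t) + f = 0 on [0, x₁] with u(0) = 0 and EA·u'(x₁) = F (constants EA > 0, f, F real), then u(t) = (F t + f x₁ t - f t^2/2)/(EA), and the stationarity of the virtual-work functional with respect to the endpoint x₁ forces the additional condition (1/2)EA·u'(x₁)^2 + f·u(x₁) = 0. -/

import Mathlib

/-- An axially loaded bar: if `EA·u'' + f = 0` on `[0, x₁]` with `u(0) = 0` and
`EA·u'(x₁) = F`, then `u(t) = (Ft + f·x₁·t - f·t²/2)/EA` on `[0, x₁]`; moreover
stationarity of the virtual-work functional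
`W(s) = ∫₀ˢ (f·u - (EA/2)·u'²) + F·u(s)` with respect to the movable endpoint `x₁`
forces the virtual work boundary condition `(1/2)EA·u'(x₁)² + f·u(x₁) = 0`. -/
theorem bar_movable_endpoint
    (EA f F x₁ : ℝ) (hEA : 0 < EA) (hx₁ : 0 < x₁)
    (u : ℝ → ℝ) (hu : ContDiff ℝ 2 u)
    (hode : ∀ t ∈ Set.Icc 0 x₁, EA * iteratedDeriv 2 u t + f = 0)
    (h0 : u 0 = 0) (hF : EA * deriv u x₁ = F)
    (W : ℝ → ℝ)
    (hWdef : ∀ s, W s = (∫ t in (0:ℝ)..s, (f * u t - EA/2 * (deriv u t)^2)) + F * u s) :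
    (∀ t ∈ Set.Icc 0 x₁, u t = (F*t + f*x₁*t - f*t^2/2) / EA) ∧
    (deriv W x₁ = 0 → (1/2) * EA * (deriv u x₁)^2 + f * u x₁ = 0) := by
  have hEA' : EA ≠ 0 := ne_of_gt hEA
  have hu1 : ContDiff ℝ 1 (deriv u) := ((contDiff_succ_iff_deriv.mp (by exact_mod_cast hu : ContDiff ℝ (1+1) u)).2.2 : ContDiff ℝ 1 (deriv u))
  have hud : Differentiable ℝ u := hu.differentiable (by norm_num)
  have hud1 : Differentiable ℝ (deriv u) := hu1.differentiable (by norm_num)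
  have hcu : Continuous u := hud.continuous
  have hcu' : Continuous (deriv u) := hud1.continuous
  -- the candidate polynomial part
  set p : ℝ → ℝ := fun t => (F*t + f*x₁*t - f*t^2/2) / EA with hp
  have hpd : ∀ t, HasDerivAt p ((F + f*x₁ - f*t)/EA) t := by
    intro t
    have h1 : HasDerivAt (fun t : ℝ => F*t + f*x₁*t - f*t^2/2)
        (F + f*x₁ - f*t) t := by
      have := (((hasDerivAt_id t).const_mul F).add
        ((hasDerivAt_id t).const_mul (f*x₁))).sub
        (((hasDerivAt_pow 2 t)).const_mul f |>.div_const 2)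
      convert this using 1
      · rfl
      · rfl
      · rfl
      · norm_num
        ring
    exact h1.div_const EA
  set v : ℝ → ℝ := fun t => u t - p t with hv
  have hvd : ∀ t, HasDerivAt v (deriv u t - (F + f*x₁ - f*t)/EA) t := fun t =>
    ((hud t).hasDerivAt).sub (hpd t)
  have hvd' : ∀ t, deriv v t = deriv u t - (F + f*x₁ - f*t)/EA := fun t =>
    (hvd t).deriv
  -- derivative of deriv v is zero on the interval
  have hdvd : ∀ t, HasDerivAt (deriv v) (iteratedDeriv 2 u t + f/EA) t := by
    intro t
    have h2 : HasDerivAt (deriv u) (iteratedDeriv 2 u t) t := by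
      have := (hud1 t).hasDerivAt
      rwa [iteratedDeriv_succ, iteratedDeriv_one]
    have h3 : HasDerivAt (fun t : ℝ => (F + f*x₁ - f*t)/EA) (-f/EA) t := by
      have := (((hasDerivAt_const t (F + f*x₁)).sub
        ((hasDerivAt_id t).const_mul f))).div_const EA
      simpa using this
    have := h2.sub h3
    have heq : (deriv u - fun t => (F + f*x₁ - f*t)/EA) = deriv v := by
      funext s; rw [hvd' s]; rfl
    rw [heq] at this
    rw [show iteratedDeriv 2 u t + f/EA = iteratedDeriv 2 u t - -f/EA by ring]
    exact this
  have hdvzero : ∀ t ∈ Set.Icc (0:ℝ) x₁, iteratedDeriv 2 u t + f/EA = 0 := by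
    intro t ht
    have := hode t ht
    field_simp
    linarith
  -- deriv v is constant on [0, x₁]
  have hconst : ∀ t ∈ Set.Icc (0:ℝ) x₁, deriv v t = deriv v 0 := by
    apply constant_of_has_deriv_right_zero
    · exact (Continuous.continuousOn (by
        have : Continuous (fun t => deriv u t - (F + f*x₁ - f*t)/EA) :=
          hcu'.sub (by continuity)
        have heq : (fun t => deriv u t - (F + f*x₁ - f*t)/EA) = deriv v := by
          funext s; rw [hvd' s]
        rwa [heq] at this))
    · intro t ht
      have := (hdvd t).hasDerivWithinAt (s := Set.Ici t)
      rwa [hdvzero t (Set.mem_Icc_of_Ico ht)] at this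
  -- deriv v x₁ = 0, so deriv v 0 = 0, so deriv v = 0 on Icc
  have hvx1 : deriv v x₁ = 0 := by
    rw [hvd' x₁]
    have : deriv u x₁ = F / EA := by field_simp at hF ⊢; linarith
    rw [this]; field_simp; ring
  have hdv0 : deriv v 0 = 0 := by
    have := hconst x₁ (Set.mem_Icc.mpr ⟨le_of_lt hx₁, le_refl x₁⟩)
    rw [hvx1] at this; exact this.symm
  -- v is constant on [0, x₁], equal to v 0 = 0
  have hvconst : ∀ t ∈ Set.Icc (0:ℝ) x₁, v t = v 0 := by
    apply constant_of_has_deriv_right_zero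
    · have hcp : Continuous p := by
        have : Continuous (fun t : ℝ => F*t + f*x₁*t - f*t^2/2) := by fun_prop
        exact this.div_const EA
      exact (hcu.sub hcp).continuousOn
    · intro t ht
      have h4 := ((hvd t).hasDerivWithinAt (s := Set.Ici t))
      have h5 : deriv u t - (F + f*x₁ - f*t)/EA = 0 := by
        have := hconst t (Set.mem_Icc_of_Ico ht)
        rw [hdv0] at this
        rw [← hvd' t]; exact this
      rwa [h5] at h4
  have hv0 : v 0 = 0 := by simp [hv, hp, h0]
  have part1 : ∀ t ∈ Set.Icc 0 x₁, u t = (F*t + f*x₁*t - f*t^2/2) / EA := by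
    intro t ht
    have := hvconst t ht
    rw [hv0] at this
    have : u t - p t = 0 := this
    linarith [this]
  refine ⟨part1, ?_⟩
  -- Part 2: compute deriv W x₁
  intro hW0
  have hWfun : W = fun s => (∫ t in (0:ℝ)..s, (f * u t - EA/2 * (deriv u t)^2)) + F * u s := by
    funext s; exact hWdef s
  have hg : Continuous (fun t => f * u t - EA/2 * (deriv u t)^2) := by
    exact (continuous_const.mul hcu).sub (continuous_const.mul (hcu'.pow 2))
  have hInt : HasDerivAt (fun s => ∫ t in (0:ℝ)..s, (f * u t - EA/2 * (deriv u t)^2))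
      (f * u x₁ - EA/2 * (deriv u x₁)^2) x₁ :=
    (hg.integral_hasStrictDerivAt 0 x₁).hasDerivAt
  have hWd : HasDerivAt W (f * u x₁ - EA/2 * (deriv u x₁)^2 + F * deriv u x₁) x₁ := by
    rw [hWfun]
    exact hInt.add ((hud x₁).hasDerivAt.const_mul F)
  have hWderiv : deriv W x₁ = f * u x₁ - EA/2 * (deriv u x₁)^2 + F * deriv u x₁ := hWd.deriv
  rw [hWderiv] at hW0
  have : F * deriv u x₁ = EA * (deriv u x₁)^2 := by rw [← hF]; ring
  nlinarith [hW0, this]
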